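/- Fenwick sum via bit decomposition: for 1 ≤ i ≤ n, sum(i) computed by the Fenwick tree accesses exactly popcount(i) entries of F, and popcount(i) ≤ log2 n + 1; hence the sequential Fenwick sum algorithm performs at most ⌊log2 n⌋ + 1 array accesses. -/

import Mathlib

/-- Position of the least significant set bit of a positive natural. -/
def rmb (i : ℕ) : ℕ := padicValNat 2 i

/-- Number of 1-bits in the binary representation. -/
def popcount (i : ℕ) : ℕ := (Nat.bits i).count true

/-- One step of the sum sequence: clear the lowest set bit. -/
def sumStep (x : ℕ) : ℕ := x - 2 ^ rmb x

/-- The sum sequence of `i`. -/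
def sumSeq (i j : ℕ) : ℕ := sumStep^[j] i

/-- One step of the update sequence. -/
def updStep (x : ℕ) : ℕ := x + 2 ^ rmb x

/-- The update sequence of `i`. -/
def updSeq (i j : ℕ) : ℕ := updStep^[j] i

/-- The Fenwick array of `A`: entry `k` sums `A` over `(k - 2^(rmb k), k]`. -/
def fenwick (A : ℕ → ℤ) (k : ℕ) : ℤ := ∑ m ∈ Finset.Ioc (k - 2 ^ rmb k) k, A m

lemma popcount_two_mul (k : ℕ) : popcount (2 * k) = popcount k := by
  rcases eq_or_ne k 0 with rfl | hk
  · rfl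
  · unfold popcount; rw [Nat.bit0_bits k hk]; simp

lemma popcount_two_mul_add_one (k : ℕ) : popcount (2 * k + 1) = popcount k + 1 := by
  unfold popcount; rw [Nat.bit1_bits]; simp

lemma two_pow_rmb_le {x : ℕ} (hx : 0 < x) : 2 ^ rmb x ≤ x :=
  Nat.le_of_dvd hx pow_padicValNat_dvd

lemma rmb_two_mul {k : ℕ} (hk : k ≠ 0) : rmb (2 * k) = rmb k + 1 := by
  unfold rmb
  rw [padicValNat.mul (by norm_num) hk, padicValNat.self (by norm_num)]
  omega

lemma sumStep_two_mul {k : ℕ} (hk : k ≠ 0) : sumStep (2 * k) = 2 * sumStep k := by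
  unfold sumStep
  rw [rmb_two_mul hk, pow_succ]
  have := two_pow_rmb_le (Nat.pos_of_ne_zero hk)
  omega

lemma popcount_sumStep {x : ℕ} (hx : 0 < x) : popcount (sumStep x) + 1 = popcount x := by
  induction x using Nat.strong_induction_on with
  | _ x ih =>
    rcases Nat.even_or_odd x with ⟨k, hkx⟩ | ⟨k, hkx⟩
    · subst hkx
      have hkk : k + k = 2 * k := by omega
      rw [hkk] at hx ⊢
      have hk : k ≠ 0 := by omega
      rw [sumStep_two_mul hk, popcount_two_mul, popcount_two_mul]
      exact ih k (by omega) (by omega)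
    · subst hkx
      have h0 : rmb (2 * k + 1) = 0 :=
        padicValNat.eq_zero_of_not_dvd (by omega)
      have : sumStep (2 * k + 1) = 2 * k := by unfold sumStep; rw [h0]; omega
      rw [this, popcount_two_mul, popcount_two_mul_add_one]

lemma popcount_pos_iff {x : ℕ} : 0 < popcount x ↔ 0 < x := by
  constructor
  · intro h
    rcases Nat.eq_zero_or_pos x with rfl | hx
    · simp [popcount, Nat.zero_bits] at h
    · exact hx
  · intro hx
    have := popcount_sumStep hx
    omega

lemma sumSeq_zero_fixed (j : ℕ) : sumSeq 0 j = 0 := by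
  unfold sumSeq
  exact Function.iterate_fixed rfl j

lemma sumSeq_pos_iff (j x : ℕ) : 0 < sumSeq x j ↔ j < popcount x := by
  induction j generalizing x with
  | zero => simpa [sumSeq] using popcount_pos_iff.symm
  | succ j ih =>
    have hstep : sumSeq x (j + 1) = sumSeq (sumStep x) j := by
      unfold sumSeq; rw [Function.iterate_succ_apply]
    rcases Nat.eq_zero_or_pos x with rfl | hx
    · have : sumStep 0 = 0 := rfl
      rw [hstep, this, sumSeq_zero_fixed]
      simp [popcount, Nat.bits]
    · have h1 := popcount_sumStep hx
      rw [hstep, ih]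
      omega

theorem fenwick_sum_access_count (n i : ℕ) (h1 : 1 ≤ i) (h2 : i ≤ n) :
    ((Finset.range n).filter fun j => 0 < sumSeq i j).card = popcount i ∧
      popcount i ≤ Nat.log2 n + 1 := by
  have hn : 0 < n := le_trans h1 h2
  have hlog : popcount i ≤ Nat.log2 n + 1 := by
    have hsize : popcount i ≤ Nat.size i := by
      rw [← Nat.size_eq_bits_len]
      exact List.count_le_length
    have hn2 : n < 2 ^ (Nat.log2 n + 1) :=
      (Nat.log2_lt (by omega)).mp (Nat.lt_succ_self _)
    have : Nat.size i ≤ Nat.log2 n + 1 := Nat.size_le.mpr (lt_of_le_of_lt h2 hn2)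
    omega
  refine ⟨?_, hlog⟩
  have hle : popcount i ≤ n := by
    have : Nat.log2 n < n := (Nat.log2_lt (by omega)).mpr Nat.lt_two_pow_self
    omega
  have : ((Finset.range n).filter fun j => 0 < sumSeq i j) = Finset.range (popcount i) := by
    ext j
    simp only [Finset.mem_filter, Finset.mem_range, sumSeq_pos_iff]
    omega
  rw [this, Finset.card_range]
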